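/- Let V be an m×n matrix, μ > 0, g ∈ ℝᵐ, r ∈ ℝⁿ. If d solves (VᵀV + μI_n)d = −Vᵀg + r and d̄ = −(VᵀV + μI_n)^{-1}Vᵀg, then ‖Vd + g‖ ≤ ‖Vd̄ + g‖ + ‖V‖·‖r‖/μ. -/

import Mathlib

theorem inexact_residual_norm_bound (n m : ℕ)
    (V : EuclideanSpace ℝ (Fin n) →L[ℝ] EuclideanSpace ℝ (Fin m))
    (μ : ℝ) (hμ : 0 < μ) (g : EuclideanSpace ℝ (Fin m))
    (r d dbar : EuclideanSpace ℝ (Fin n))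
    (hd : ((ContinuousLinearMap.adjoint V).comp V
        + μ • ContinuousLinearMap.id ℝ (EuclideanSpace ℝ (Fin n))) d
        = -(ContinuousLinearMap.adjoint V) g + r)
    (hdbar : ((ContinuousLinearMap.adjoint V).comp V
        + μ • ContinuousLinearMap.id ℝ (EuclideanSpace ℝ (Fin n))) dbar
        = -(ContinuousLinearMap.adjoint V) g) :
    ‖V d + g‖ ≤ ‖V dbar + g‖ + ‖V‖ * ‖r‖ / μ := by
  set A := ((ContinuousLinearMap.adjoint V).comp V
      + μ • ContinuousLinearMap.id ℝ (EuclideanSpace ℝ (Fin n))) with hA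
  set e := d - dbar with he
  have hAe : A e = r := by
    rw [he, map_sub, hd, hdbar]; abel
  have hinner : inner ℝ (A e) e = ‖V e‖ ^ 2 + μ * ‖e‖ ^ 2 := by
    rw [hA]
    simp only [ContinuousLinearMap.add_apply, ContinuousLinearMap.comp_apply,
      ContinuousLinearMap.smul_apply, ContinuousLinearMap.id_apply]
    rw [inner_add_left, ContinuousLinearMap.adjoint_inner_left,
      real_inner_smul_left, real_inner_self_eq_norm_sq, real_inner_self_eq_norm_sq]
  have hre : (inner ℝ r e : ℝ) ≤ ‖r‖ * ‖e‖ := real_inner_le_norm r e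
  have hkey : μ * ‖e‖ ≤ ‖r‖ := by
    rcases eq_or_ne e 0 with h0 | h0
    · simp [h0]
    · have hne : 0 < ‖e‖ := norm_pos_iff.mpr h0
      have h1 : μ * ‖e‖ ^ 2 ≤ ‖r‖ * ‖e‖ := by
        have := hAe ▸ hinner
        nlinarith [sq_nonneg ‖V e‖]
      nlinarith
  have h2 : ‖V d + g‖ ≤ ‖V dbar + g‖ + ‖V e‖ := by
    have : V d + g = (V dbar + g) + V e := by
      rw [he, map_sub]; abel
    rw [this]
    exact norm_add_le _ _
  have h3 : ‖V e‖ ≤ ‖V‖ * ‖e‖ := V.le_opNorm e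
  have h4 : ‖V‖ * ‖e‖ ≤ ‖V‖ * ‖r‖ / μ := by
    rw [div_eq_mul_inv, mul_assoc]
    gcongr
    rw [le_mul_inv_iff₀ hμ, mul_comm]
    exact hkey
  linarith
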